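/- Let G = (V,E) be a countable locally finite network in which every local measure μ_i is Rayleigh and satisfies μ_i(∅) > 0, and fix t > 0. Define x⁰ ≡ 0 and x^{k+1} := tΓ_G(x^k) for k ∈ ℕ. Then the even iterates x^{2k} are coordinatewise nondecreasing in k and the odd iterates x^{2k+1} are coordinatewise nonincreasing, so the coordinatewise limits x⁻(t) = lim_k x^{2k} and x⁺(t) = lim_k x^{2k+1} exist; moreover tΓ_G(x⁻(t)) = x⁺(t), tΓ_G(x⁺(t)) = x⁻(t), and every fixed point x = tΓ_G(x) with x ∈ [0,∞)^{Ē} satisfies x⁻(t) ≤ x ≤ x⁺(t) coordinatewise. -/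

import Mathlib

open Finset Filter
open scoped Classical ENNReal

section LocalDefs

variable {V : Type*} [DecidableEq V]

/-- Generating polynomial `Z(w) = Σ_{S ⊆ A} ν(S) ∏_{k∈S} w_k` of a measure `ν`
on the subsets of the ground set `A`. -/
noncomputable def lZ (A : Finset V) (ν : Finset V → ℝ) (w : V → ℝ) : ℝ :=
  ∑ S ∈ A.powerset, ν S * ∏ k ∈ S, w k

/-- Gibbs--Boltzmann probability of the event `p` under external field `w`. -/
noncomputable def lProb (A : Finset V) (ν : Finset V → ℝ) (w : V → ℝ)
    (p : Finset V → Prop) : ℝ :=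
  (∑ S ∈ A.powerset.filter p, ν S * ∏ k ∈ S, w k) / lZ A ν w

/-- The energy `U_ν(w)`, i.e. the expected cardinality of the random subset. -/
noncomputable def lEnergy (A : Finset V) (ν : Finset V → ℝ) (w : V → ℝ) : ℝ :=
  (∑ S ∈ A.powerset, (S.card : ℝ) * ν S * ∏ k ∈ S, w k) / lZ A ν w

/-- `E^w_ν[|𝓕|·1_{e∈𝓕}]`. -/
noncomputable def lEnergyIn (A : Finset V) (ν : Finset V → ℝ) (e : V) (w : V → ℝ) : ℝ :=
  (∑ S ∈ A.powerset.filter (fun S => e ∈ S), (S.card : ℝ) * ν S * ∏ k ∈ S, w k) / lZ A ν w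

/-- The cavity ratio `Γ^e_ν(w') = Z^{/e}(w') / Z^{∖e}(w')`; it only depends on the
coordinates of `w` different from `e`. -/
noncomputable def lGamma (A : Finset V) (ν : Finset V → ℝ) (e : V) (w : V → ℝ) : ℝ :=
  (∑ S ∈ (A.erase e).powerset, ν (insert e S) * ∏ k ∈ S, w k) /
  (∑ S ∈ (A.erase e).powerset, ν S * ∏ k ∈ S, w k)

/-- Rayleigh property: pairwise negative correlation under every positive external field. -/
def lRayleigh (A : Finset V) (ν : Finset V → ℝ) : Prop :=
  ∀ w : V → ℝ, (∀ k ∈ A, 0 < w k) → ∀ e ∈ A, ∀ f ∈ A, e ≠ f →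
    lProb A ν w (fun S => e ∈ S ∧ f ∈ S) ≤
      lProb A ν w (fun S => e ∈ S) * lProb A ν w (fun S => f ∈ S)

/-- Size-increasing property: every ground element positively influences the total size. -/
def lSizeInc (A : Finset V) (ν : Finset V → ℝ) : Prop :=
  ∀ w : V → ℝ, (∀ k ∈ A, 0 < w k) → ∀ e ∈ A,
    lEnergy A ν w * lProb A ν w (fun S => e ∈ S) < lEnergyIn A ν e w

/-- Cavity-monotone: nonnegative, `ν(∅) > 0`, Rayleigh and size-increasing. -/
def lCavityMonotone (A : Finset V) (ν : Finset V → ℝ) : Prop :=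
  (∀ S ∈ A.powerset, 0 ≤ ν S) ∧ 0 < ν ∅ ∧ lRayleigh A ν ∧ lSizeInc A ν

end LocalDefs

section NetworkDefs

variable {V : Type*} [DecidableEq V]

/-- The cavity operator: `(Γ_G x)_{i→j}` is the cavity ratio of the local measure `μ i`
at the edge `ij`, with external field `(x_{k→i} : k ∈ ∂i ∖ {j})`.  Local measures are
encoded as functions of the set of neighbours selected. -/
noncomputable def cavOp (G : SimpleGraph V) [G.LocallyFinite]
    (μ : V → Finset V → ℝ) (x : V → V → ℝ) (i j : V) : ℝ :=
  (∑ S ∈ ((G.neighborFinset i).erase j).powerset, μ i (insert j S) * ∏ k ∈ S, x k i) /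
  (∑ S ∈ ((G.neighborFinset i).erase j).powerset, μ i S * ∏ k ∈ S, x k i)

/-- One step of the cavity iteration at activity `t` : `x ↦ t Γ_G(x)`. -/
noncomputable def cavStep (G : SimpleGraph V) [G.LocallyFinite]
    (μ : V → Finset V → ℝ) (t : ℝ) (x : V → V → ℝ) : V → V → ℝ :=
  fun i j => t * cavOp G μ x i j

/-- The neighbours `k` of `i` such that the edge `ik` belongs to the spanning subgraph `F`;
this encodes `F ∩ E_i` as a set of neighbours. -/
noncomputable def nbrsIn (G : SimpleGraph V) [G.LocallyFinite]
    (F : Finset (Sym2 V)) (i : V) : Finset V :=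
  (G.neighborFinset i).filter (fun k => s(i, k) ∈ F)

variable [Fintype V]

/-- Global measure `μ(F) = ∏_i μ_i(F ∩ E_i)` of a spanning subgraph `F`. -/
noncomputable def gWeight (G : SimpleGraph V) [DecidableRel G.Adj]
    (μ : V → Finset V → ℝ) (F : Finset (Sym2 V)) : ℝ :=
  ∏ i : V, μ i (nbrsIn G F i)

/-- Partition function `Z(G;t) = Σ_{F ⊆ E} μ(F) t^{|F|}`. -/
noncomputable def ZG (G : SimpleGraph V) [DecidableRel G.Adj]
    (μ : V → Finset V → ℝ) (t : ℝ) : ℝ :=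
  ∑ F ∈ G.edgeFinset.powerset, gWeight G μ F * t ^ F.card

/-- Gibbs--Boltzmann probability of the event `p` at activity `t`. -/
noncomputable def gProb (G : SimpleGraph V) [DecidableRel G.Adj]
    (μ : V → Finset V → ℝ) (t : ℝ) (p : Finset (Sym2 V) → Prop) : ℝ :=
  (∑ F ∈ G.edgeFinset.powerset.filter p, gWeight G μ F * t ^ F.card) / ZG G μ t

/-- Energy `U(G;t)`, the expected size of the random spanning subgraph. -/
noncomputable def UG (G : SimpleGraph V) [DecidableRel G.Adj]
    (μ : V → Finset V → ℝ) (t : ℝ) : ℝ :=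
  (∑ F ∈ G.edgeFinset.powerset, (F.card : ℝ) * gWeight G μ F * t ^ F.card) / ZG G μ t

/-- `M(G)`, the maximum size of a spanning subgraph with positive weight. -/
noncomputable def MG (G : SimpleGraph V) [DecidableRel G.Adj]
    (μ : V → Finset V → ℝ) : ℕ :=
  (G.edgeFinset.powerset.filter (fun F => 0 < gWeight G μ F)).sup Finset.card

end NetworkDefs

section AuxLocal

variable {V : Type*} [DecidableEq V]

/-- Generating sum over subsets of `B` with weight `g` and field `w`. -/
noncomputable def aSS (B : Finset V) (g : Finset V → ℝ) (w : V → ℝ) : ℝ :=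
  ∑ S ∈ B.powerset, g S * ∏ k ∈ S, w k

lemma aSS_congr {B : Finset V} {g : Finset V → ℝ} {w w' : V → ℝ}
    (h : ∀ k ∈ B, w k = w' k) : aSS B g w = aSS B g w' :=
  Finset.sum_congr rfl fun S hS => by
    rw [Finset.prod_congr rfl fun k hk => h k (Finset.mem_powerset.mp hS hk)]

lemma aSS_nonneg {B : Finset V} {g : Finset V → ℝ} {w : V → ℝ}
    (hg : ∀ S ∈ B.powerset, 0 ≤ g S) (hw : ∀ k ∈ B, 0 ≤ w k) : 0 ≤ aSS B g w :=
  Finset.sum_nonneg fun S hS => mul_nonneg (hg S hS)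
    (Finset.prod_nonneg fun k hk => hw k (Finset.mem_powerset.mp hS hk))

lemma aSS_pos {B : Finset V} {g : Finset V → ℝ} {w : V → ℝ}
    (hg : ∀ S ∈ B.powerset, 0 ≤ g S) (hw : ∀ k ∈ B, 0 ≤ w k) (h0 : 0 < g ∅) :
    0 < aSS B g w := by
  have h1 : g ∅ * ∏ k ∈ (∅ : Finset V), w k ≤ aSS B g w :=
    Finset.single_le_sum
      (fun S hS => mul_nonneg (hg S hS)
        (Finset.prod_nonneg fun k hk => hw k (Finset.mem_powerset.mp hS hk)))
      (Finset.empty_mem_powerset B)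
  have h2 : (0:ℝ) < g ∅ * ∏ k ∈ (∅ : Finset V), w k := by simpa using h0
  exact lt_of_lt_of_le h2 h1

lemma aSS_split {B : Finset V} {e : V} (he : e ∈ B) (g : Finset V → ℝ) (w : V → ℝ) :
    aSS B g w = aSS (B.erase e) g w + w e * aSS (B.erase e) (fun S => g (insert e S)) w := by
  have h1 : ∑ S ∈ B.powerset, g S * ∏ k ∈ S, w k
      = ∑ S ∈ (B.erase e).powerset, g S * ∏ k ∈ S, w k
        + ∑ S ∈ (B.erase e).powerset, g (insert e S) * ∏ k ∈ insert e S, w k := by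
    conv_lhs => rw [← Finset.insert_erase he]
    exact Finset.sum_powerset_insert (Finset.notMem_erase e B) _
  simp only [aSS]
  rw [h1, Finset.mul_sum]
  congr 1
  refine Finset.sum_congr rfl fun S hS => ?_
  have heS : e ∉ S := fun h => Finset.notMem_erase e B (Finset.mem_powerset.mp hS h)
  rw [Finset.prod_insert heS]; ring

lemma sum_filter_mem {B : Finset V} {e : V} (he : e ∈ B) (F : Finset V → ℝ) :
    ∑ S ∈ B.powerset.filter (fun S => e ∈ S), F S
      = ∑ S ∈ (B.erase e).powerset, F (insert e S) := by
  refine Finset.sum_nbij' (fun S => S.erase e) (fun S => insert e S) ?_ ?_ ?_ ?_ ?_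
  · intro S hS
    rw [Finset.mem_filter, Finset.mem_powerset] at hS
    exact Finset.mem_powerset.mpr (Finset.erase_subset_erase e hS.1)
  · intro S hS
    rw [Finset.mem_powerset] at hS
    rw [Finset.mem_filter, Finset.mem_powerset]
    exact ⟨Finset.insert_subset he (hS.trans (Finset.erase_subset e B)),
      Finset.mem_insert_self e S⟩
  · intro S hS
    rw [Finset.mem_filter] at hS
    exact Finset.insert_erase hS.2
  · intro S hS
    rw [Finset.mem_powerset] at hS
    exact Finset.erase_insert fun h => Finset.notMem_erase e B (hS h)
  · intro S hS
    rw [Finset.mem_filter] at hS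
    rw [Finset.insert_erase hS.2]

lemma sum_filter_mem2 {B : Finset V} {e f : V} (he : e ∈ B) (hf : f ∈ B) (hef : e ≠ f)
    (F : Finset V → ℝ) :
    ∑ S ∈ B.powerset.filter (fun S => e ∈ S ∧ f ∈ S), F S
      = ∑ S ∈ ((B.erase e).erase f).powerset, F (insert e (insert f S)) := by
  refine Finset.sum_nbij' (fun S => (S.erase e).erase f) (fun S => insert e (insert f S))
    ?_ ?_ ?_ ?_ ?_
  · intro S hS
    rw [Finset.mem_filter, Finset.mem_powerset] at hS
    exact Finset.mem_powerset.mpr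
      (Finset.erase_subset_erase f (Finset.erase_subset_erase e hS.1))
  · intro S hS
    rw [Finset.mem_powerset] at hS
    rw [Finset.mem_filter, Finset.mem_powerset]
    have hsub : S ⊆ B := hS.trans ((Finset.erase_subset _ _).trans (Finset.erase_subset _ _))
    exact ⟨Finset.insert_subset he (Finset.insert_subset hf hsub),
      Finset.mem_insert_self e _, Finset.mem_insert_of_mem (Finset.mem_insert_self f S)⟩
  · intro S hS
    rw [Finset.mem_filter] at hS
    have hfe : f ∈ S.erase e := Finset.mem_erase.mpr ⟨fun h => hef h.symm, hS.2.2⟩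
    show insert e (insert f ((S.erase e).erase f)) = S
    rw [Finset.insert_erase hfe, Finset.insert_erase hS.2.1]
  · intro S hS
    rw [Finset.mem_powerset] at hS
    have hfS : f ∉ S := fun h => Finset.notMem_erase f (B.erase e) (hS h)
    have heS : e ∉ insert f S := by
      intro h
      rcases Finset.mem_insert.mp h with h | h
      · exact hef h
      · exact Finset.notMem_erase e B (Finset.mem_of_mem_erase (hS h))
    show ((insert e (insert f S)).erase e).erase f = S
    rw [Finset.erase_insert heS, Finset.erase_insert hfS]
  · intro S hS
    rw [Finset.mem_filter] at hS
    have hfe : f ∈ S.erase e := Finset.mem_erase.mpr ⟨fun h => hef h.symm, hS.2.2⟩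
    show F S = F (insert e (insert f ((S.erase e).erase f)))
    rw [Finset.insert_erase hfe, Finset.insert_erase hS.2.1]

lemma lProb_eq (A : Finset V) (ν : Finset V → ℝ) (w : V → ℝ) (p : Finset V → Prop)
    [DecidablePred p] :
    lProb A ν w p = (∑ S ∈ A.powerset.filter p, ν S * ∏ k ∈ S, w k) / lZ A ν w := by
  unfold lProb
  congr 1
  rw [Finset.filter_congr_decidable]

lemma key_pos {A : Finset V} {ν : Finset V → ℝ}
    (hν : ∀ S ∈ A.powerset, 0 ≤ ν S) (h0 : 0 < ν ∅) (hr : lRayleigh A ν)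
    {e f : V} (he : e ∈ A) (hf : f ∈ A) (hef : e ≠ f) {w : V → ℝ}
    (hw : ∀ k ∈ A, 0 < w k) :
    aSS ((A.erase e).erase f) (fun S => ν (insert e (insert f S))) w *
        aSS ((A.erase e).erase f) ν w ≤
      aSS ((A.erase e).erase f) (fun S => ν (insert e S)) w *
        aSS ((A.erase e).erase f) (fun S => ν (insert f S)) w := by
  have hfA : f ∈ A.erase e := Finset.mem_erase.mpr ⟨fun h => hef h.symm, hf⟩
  have heA : e ∈ A.erase f := Finset.mem_erase.mpr ⟨hef, he⟩
  have hwnn : ∀ k ∈ A, 0 ≤ w k := fun k hk => (hw k hk).le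
  have hZpos : 0 < lZ A ν w := aSS_pos hν hwnn h0
  -- decompositions
  have hNf : aSS (A.erase e) (fun S => ν (insert e S)) w
      = aSS ((A.erase e).erase f) (fun S => ν (insert e S)) w
        + w f * aSS ((A.erase e).erase f) (fun S => ν (insert e (insert f S))) w :=
    aSS_split hfA (fun S => ν (insert e S)) w
  have hZf : aSS (A.erase e) ν w
      = aSS ((A.erase e).erase f) ν w
        + w f * aSS ((A.erase e).erase f) (fun S => ν (insert f S)) w :=
    aSS_split hfA ν w
  have hMf : aSS (A.erase f) (fun S => ν (insert f S)) w
      = aSS ((A.erase f).erase e) (fun S => ν (insert f S)) w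
        + w e * aSS ((A.erase f).erase e) (fun S => ν (insert f (insert e S))) w :=
    aSS_split heA (fun S => ν (insert f S)) w
  have hcomm : (A.erase f).erase e = (A.erase e).erase f := Finset.erase_right_comm
  have hcomm2 : (fun S : Finset V => ν (insert f (insert e S)))
      = (fun S => ν (insert e (insert f S))) := by
    funext S; rw [Finset.insert_comm]
  rw [hcomm, hcomm2] at hMf
  have hZdec : lZ A ν w
      = (aSS ((A.erase e).erase f) ν w
          + w f * aSS ((A.erase e).erase f) (fun S => ν (insert f S)) w)
        + w e * (aSS ((A.erase e).erase f) (fun S => ν (insert e S)) w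
          + w f * aSS ((A.erase e).erase f) (fun S => ν (insert e (insert f S))) w) := by
    show aSS A ν w = _
    rw [aSS_split he ν w, hZf, hNf]
  -- numerators
  have hnum_e : (∑ S ∈ A.powerset.filter (fun S => e ∈ S), ν S * ∏ k ∈ S, w k)
      = w e * aSS (A.erase e) (fun S => ν (insert e S)) w := by
    rw [sum_filter_mem he]
    simp only [aSS]
    rw [Finset.mul_sum]
    refine Finset.sum_congr rfl fun S hS => ?_
    have heS : e ∉ S := fun h => Finset.notMem_erase e A (Finset.mem_powerset.mp hS h)
    rw [Finset.prod_insert heS]; ring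
  have hnum_f : (∑ S ∈ A.powerset.filter (fun S => f ∈ S), ν S * ∏ k ∈ S, w k)
      = w f * aSS (A.erase f) (fun S => ν (insert f S)) w := by
    rw [sum_filter_mem hf]
    simp only [aSS]
    rw [Finset.mul_sum]
    refine Finset.sum_congr rfl fun S hS => ?_
    have hfS : f ∉ S := fun h => Finset.notMem_erase f A (Finset.mem_powerset.mp hS h)
    rw [Finset.prod_insert hfS]; ring
  have hnum_ef : (∑ S ∈ A.powerset.filter (fun S => e ∈ S ∧ f ∈ S), ν S * ∏ k ∈ S, w k)
      = w e * (w f * aSS ((A.erase e).erase f) (fun S => ν (insert e (insert f S))) w) := by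
    rw [sum_filter_mem2 he hf hef]
    simp only [aSS]
    rw [Finset.mul_sum, Finset.mul_sum]
    refine Finset.sum_congr rfl fun S hS => ?_
    have hS' := Finset.mem_powerset.mp hS
    have hfS : f ∉ S := fun h =>
      Finset.notMem_erase f (A.erase e) (hS' h)
    have heS : e ∉ insert f S := by
      intro h
      rcases Finset.mem_insert.mp h with h | h
      · exact hef h
      · exact Finset.notMem_erase e A (Finset.mem_of_mem_erase (hS' h))
    rw [Finset.prod_insert heS, Finset.prod_insert hfS]; ring
  -- Rayleigh
  have hraym := hr w hw e he f hf hef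
  rw [lProb_eq, lProb_eq, lProb_eq] at hraym
  have hmain : (∑ S ∈ A.powerset.filter (fun S => e ∈ S ∧ f ∈ S), ν S * ∏ k ∈ S, w k)
        * lZ A ν w
      ≤ (∑ S ∈ A.powerset.filter (fun S => e ∈ S), ν S * ∏ k ∈ S, w k)
        * (∑ S ∈ A.powerset.filter (fun S => f ∈ S), ν S * ∏ k ∈ S, w k) := by
    rw [div_mul_div_comm, div_le_div_iff₀ hZpos (mul_pos hZpos hZpos)] at hraym
    rw [← mul_assoc] at hraym
    exact le_of_mul_le_mul_right hraym hZpos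
  rw [hnum_ef, hnum_e, hnum_f, hNf, hMf, hZdec] at hmain
  have h3 : (w e * w f) *
        (aSS ((A.erase e).erase f) (fun S => ν (insert e (insert f S))) w *
          aSS ((A.erase e).erase f) ν w)
      ≤ (w e * w f) *
        (aSS ((A.erase e).erase f) (fun S => ν (insert e S)) w *
          aSS ((A.erase e).erase f) (fun S => ν (insert f S)) w) := by
    nlinarith [hmain]
  exact le_of_mul_le_mul_left h3 (mul_pos (hw e he) (hw f hf))

lemma key_nonneg {A : Finset V} {ν : Finset V → ℝ}
    (hν : ∀ S ∈ A.powerset, 0 ≤ ν S) (h0 : 0 < ν ∅) (hr : lRayleigh A ν)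
    {e f : V} (he : e ∈ A) (hf : f ∈ A) (hef : e ≠ f) {w : V → ℝ}
    (hw : ∀ k ∈ (A.erase e).erase f, 0 ≤ w k) :
    aSS ((A.erase e).erase f) (fun S => ν (insert e (insert f S))) w *
        aSS ((A.erase e).erase f) ν w ≤
      aSS ((A.erase e).erase f) (fun S => ν (insert e S)) w *
        aSS ((A.erase e).erase f) (fun S => ν (insert f S)) w := by
  set u : ℝ → V → ℝ := fun ε k => (if k ∈ (A.erase e).erase f then w k else 0) + ε with hu
  have hcont : ∀ g : Finset V → ℝ,
      Continuous fun ε : ℝ => aSS ((A.erase e).erase f) g (u ε) := by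
    intro g
    simp only [aSS]
    refine continuous_finset_sum _ fun S hS => ?_
    refine continuous_const.mul (continuous_finset_prod _ fun k hk => ?_)
    show Continuous fun ε : ℝ => (if k ∈ (A.erase e).erase f then w k else 0) + ε
    exact continuous_const.add continuous_id
  have hval : ∀ g : Finset V → ℝ,
      aSS ((A.erase e).erase f) g (u 0) = aSS ((A.erase e).erase f) g w := by
    intro g
    refine aSS_congr fun k hk => ?_
    show (if k ∈ (A.erase e).erase f then w k else 0) + 0 = w k
    rw [if_pos hk, add_zero]
  have hposu : ∀ ε : ℝ, 0 < ε → ∀ k ∈ A, 0 < u ε k := by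
    intro ε hε k _
    show 0 < (if k ∈ (A.erase e).erase f then w k else 0) + ε
    by_cases h : k ∈ (A.erase e).erase f
    · rw [if_pos h]; have := hw k h; linarith
    · rw [if_neg h]; linarith
  have hT1 : Tendsto (fun ε : ℝ =>
        aSS ((A.erase e).erase f) (fun S => ν (insert e (insert f S))) (u ε) *
          aSS ((A.erase e).erase f) ν (u ε))
      (nhdsWithin 0 (Set.Ioi 0))
      (nhds (aSS ((A.erase e).erase f) (fun S => ν (insert e (insert f S))) w *
        aSS ((A.erase e).erase f) ν w)) := by
    have h := ((hcont (fun S => ν (insert e (insert f S)))).mul (hcont ν)).tendsto 0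
    rw [Pi.mul_apply, hval, hval] at h
    exact h.mono_left nhdsWithin_le_nhds
  have hT2 : Tendsto (fun ε : ℝ =>
        aSS ((A.erase e).erase f) (fun S => ν (insert e S)) (u ε) *
          aSS ((A.erase e).erase f) (fun S => ν (insert f S)) (u ε))
      (nhdsWithin 0 (Set.Ioi 0))
      (nhds (aSS ((A.erase e).erase f) (fun S => ν (insert e S)) w *
        aSS ((A.erase e).erase f) (fun S => ν (insert f S)) w)) := by
    have h := ((hcont (fun S => ν (insert e S))).mul
      (hcont (fun S => ν (insert f S)))).tendsto 0
    rw [Pi.mul_apply, hval, hval] at h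
    exact h.mono_left nhdsWithin_le_nhds
  have hev : ∀ᶠ ε in nhdsWithin (0:ℝ) (Set.Ioi 0),
      aSS ((A.erase e).erase f) (fun S => ν (insert e (insert f S))) (u ε) *
          aSS ((A.erase e).erase f) ν (u ε)
        ≤ aSS ((A.erase e).erase f) (fun S => ν (insert e S)) (u ε) *
          aSS ((A.erase e).erase f) (fun S => ν (insert f S)) (u ε) := by
    filter_upwards [self_mem_nhdsWithin] with ε hε
    exact key_pos hν h0 hr he hf hef (hposu ε hε)
  exact le_of_tendsto_of_tendsto hT1 hT2 hev

lemma lGamma_eq (A : Finset V) (ν : Finset V → ℝ) (e : V) (w : V → ℝ) :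
    lGamma A ν e w = aSS (A.erase e) (fun S => ν (insert e S)) w / aSS (A.erase e) ν w := rfl

lemma gamma_congr {A : Finset V} {ν : Finset V → ℝ} {e : V} {w w' : V → ℝ}
    (h : ∀ k ∈ A.erase e, w k = w' k) : lGamma A ν e w = lGamma A ν e w' := by
  rw [lGamma_eq, lGamma_eq, aSS_congr h, aSS_congr h]

lemma gamma_nonneg {A : Finset V} {ν : Finset V → ℝ}
    (hν : ∀ S ∈ A.powerset, 0 ≤ ν S) (h0 : 0 < ν ∅)
    {e : V} (he : e ∈ A) {w : V → ℝ} (hw : ∀ k ∈ A.erase e, 0 ≤ w k) :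
    0 ≤ lGamma A ν e w := by
  rw [lGamma_eq]
  have hsubA : A.erase e ⊆ A := Finset.erase_subset _ _
  refine div_nonneg (aSS_nonneg (fun S hS => hν _ (Finset.mem_powerset.mpr
    (Finset.insert_subset he ((Finset.mem_powerset.mp hS).trans hsubA)))) hw) ?_
  exact (aSS_pos (fun S hS => hν _ (Finset.mem_powerset.mpr
    ((Finset.mem_powerset.mp hS).trans hsubA))) hw h0).le

lemma gamma_update {A : Finset V} {ν : Finset V → ℝ}
    (hν : ∀ S ∈ A.powerset, 0 ≤ ν S) (h0 : 0 < ν ∅) (hr : lRayleigh A ν)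
    {e f : V} (he : e ∈ A) (hf : f ∈ A.erase e) {w : V → ℝ}
    (hw : ∀ k ∈ A.erase e, 0 ≤ w k) {c c' : ℝ} (hc : 0 ≤ c) (hcc : c ≤ c') :
    lGamma A ν e (Function.update w f c') ≤ lGamma A ν e (Function.update w f c) := by
  have hfA : f ∈ A := Finset.mem_of_mem_erase hf
  have hfe : f ≠ e := (Finset.mem_erase.mp hf).1
  have hw2 : ∀ k ∈ (A.erase e).erase f, 0 ≤ w k := fun k hk =>
    hw k (Finset.mem_of_mem_erase hk)
  have hsubA : (A.erase e).erase f ⊆ A := fun k hk =>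
    Finset.mem_of_mem_erase (Finset.mem_of_mem_erase hk)
  have hνB2 : ∀ S ∈ ((A.erase e).erase f).powerset, 0 ≤ ν S := fun S hS =>
    hν S (Finset.mem_powerset.mpr ((Finset.mem_powerset.mp hS).trans hsubA))
  have hdecN : ∀ d : ℝ, aSS (A.erase e) (fun S => ν (insert e S)) (Function.update w f d)
      = aSS ((A.erase e).erase f) (fun S => ν (insert e S)) w
        + d * aSS ((A.erase e).erase f) (fun S => ν (insert e (insert f S))) w := by
    intro d
    have h1 : aSS (A.erase e) (fun S => ν (insert e S)) (Function.update w f d)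
        = aSS ((A.erase e).erase f) (fun S => ν (insert e S)) (Function.update w f d)
          + (Function.update w f d) f *
            aSS ((A.erase e).erase f) (fun S => ν (insert e (insert f S)))
              (Function.update w f d) :=
      aSS_split hf (fun S => ν (insert e S)) (Function.update w f d)
    rw [h1, Function.update_self]
    congr 1
    · exact aSS_congr fun k hk => Function.update_of_ne (Finset.mem_erase.mp hk).1 d w
    · congr 1
      exact aSS_congr fun k hk => Function.update_of_ne (Finset.mem_erase.mp hk).1 d w
  have hdecD : ∀ d : ℝ, aSS (A.erase e) ν (Function.update w f d)
      = aSS ((A.erase e).erase f) ν w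
        + d * aSS ((A.erase e).erase f) (fun S => ν (insert f S)) w := by
    intro d
    have h1 : aSS (A.erase e) ν (Function.update w f d)
        = aSS ((A.erase e).erase f) ν (Function.update w f d)
          + (Function.update w f d) f *
            aSS ((A.erase e).erase f) (fun S => ν (insert f S)) (Function.update w f d) :=
      aSS_split hf ν (Function.update w f d)
    rw [h1, Function.update_self]
    congr 1
    · exact aSS_congr fun k hk => Function.update_of_ne (Finset.mem_erase.mp hk).1 d w
    · congr 1
      exact aSS_congr fun k hk => Function.update_of_ne (Finset.mem_erase.mp hk).1 d w
  have hkey := key_nonneg hν h0 hr he hfA hfe.symm hw2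
  have hD0pos : 0 < aSS ((A.erase e).erase f) ν w := aSS_pos hνB2 hw2 h0
  have hD1nn : 0 ≤ aSS ((A.erase e).erase f) (fun S => ν (insert f S)) w :=
    aSS_nonneg (fun S hS => hν _ (Finset.mem_powerset.mpr
      (Finset.insert_subset hfA ((Finset.mem_powerset.mp hS).trans hsubA)))) hw2
  have hN0nn : 0 ≤ aSS ((A.erase e).erase f) (fun S => ν (insert e S)) w :=
    aSS_nonneg (fun S hS => hν _ (Finset.mem_powerset.mpr
      (Finset.insert_subset he ((Finset.mem_powerset.mp hS).trans hsubA)))) hw2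
  have hN1nn : 0 ≤ aSS ((A.erase e).erase f) (fun S => ν (insert e (insert f S))) w :=
    aSS_nonneg (fun S hS => hν _ (Finset.mem_powerset.mpr
      (Finset.insert_subset he (Finset.insert_subset hfA
        ((Finset.mem_powerset.mp hS).trans hsubA))))) hw2
  have hc' : 0 ≤ c' := hc.trans hcc
  rw [lGamma_eq, lGamma_eq, hdecN c, hdecN c', hdecD c, hdecD c']
  rw [div_le_div_iff₀ (by nlinarith [hD0pos, mul_nonneg hc' hD1nn])
    (by nlinarith [hD0pos, mul_nonneg hc hD1nn])]
  nlinarith [mul_nonneg (sub_nonneg.mpr hcc) (sub_nonneg.mpr hkey)]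

lemma gamma_antitone {A : Finset V} {ν : Finset V → ℝ}
    (hν : ∀ S ∈ A.powerset, 0 ≤ ν S) (h0 : 0 < ν ∅) (hr : lRayleigh A ν)
    {e : V} (he : e ∈ A) {w w' : V → ℝ}
    (hw : ∀ k ∈ A.erase e, 0 ≤ w k ∧ w k ≤ w' k) :
    lGamma A ν e w' ≤ lGamma A ν e w := by
  have main : ∀ T : Finset V, T ⊆ A.erase e →
      lGamma A ν e (fun k => if k ∈ T then w' k else w k) ≤ lGamma A ν e w := by
    intro T
    induction T using Finset.induction_on with
    | empty =>
      intro _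
      have h : (fun k => if k ∈ (∅ : Finset V) then w' k else w k) = w := by
        funext k; simp
      rw [h]
    | @insert a T ha ih =>
      intro hsub
      have haB : a ∈ A.erase e := hsub (Finset.mem_insert_self a T)
      have hTsub : T ⊆ A.erase e := (Finset.subset_insert a T).trans hsub
      have hupd : (fun k => if k ∈ insert a T then w' k else w k)
          = Function.update (fun k => if k ∈ T then w' k else w k) a (w' a) := by
        funext k
        rcases eq_or_ne k a with rfl | hk
        · simp [ha]
        · simp [Function.update_of_ne hk, Finset.mem_insert, hk]
      have hbase : Function.update (fun k => if k ∈ T then w' k else w k) a (w a)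
          = (fun k => if k ∈ T then w' k else w k) := by
        funext k
        rcases eq_or_ne k a with rfl | hk
        · simp [ha]
        · simp [Function.update_of_ne hk]
      have hnn : ∀ k ∈ A.erase e, 0 ≤ (fun k => if k ∈ T then w' k else w k) k := by
        intro k hk
        by_cases h : k ∈ T
        · simp only [if_pos h]; exact (hw k hk).1.trans (hw k hk).2
        · simp only [if_neg h]; exact (hw k hk).1
      have step := gamma_update hν h0 hr he haB hnn (hw a haB).1 (hw a haB).2
      rw [hupd]
      refine le_trans step ?_
      rw [hbase]
      exact ih hTsub
  have hfin := main (A.erase e) (le_refl _)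
  have h : lGamma A ν e (fun k => if k ∈ A.erase e then w' k else w k) = lGamma A ν e w' :=
    gamma_congr fun k hk => by simp [hk]
  rw [h] at hfin
  exact hfin

end AuxLocal

section AuxNet

variable {V : Type*} [DecidableEq V] (G : SimpleGraph V) [G.LocallyFinite]
  (μ : V → Finset V → ℝ)

lemma cavOp_eq (x : V → V → ℝ) (i j : V) :
    cavOp G μ x i j = lGamma (G.neighborFinset i) (μ i) j (fun k => x k i) := rfl

lemma cav_nonneg (hnn : ∀ i : V, ∀ S ∈ (G.neighborFinset i).powerset, 0 ≤ μ i S)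
    (h0 : ∀ i : V, 0 < μ i ∅) {x : V → V → ℝ} {i j : V} (hij : G.Adj i j)
    (hx : ∀ k, G.Adj k i → 0 ≤ x k i) : 0 ≤ cavOp G μ x i j := by
  rw [cavOp_eq]
  refine gamma_nonneg (hnn i) (h0 i) ((G.mem_neighborFinset i j).mpr hij) ?_
  intro k hk
  exact hx k (((G.mem_neighborFinset i k).mp (Finset.mem_of_mem_erase hk)).symm)

lemma cav_antitone (hnn : ∀ i : V, ∀ S ∈ (G.neighborFinset i).powerset, 0 ≤ μ i S)
    (h0 : ∀ i : V, 0 < μ i ∅) (hray : ∀ i : V, lRayleigh (G.neighborFinset i) (μ i))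
    {x y : V → V → ℝ} {i j : V} (hij : G.Adj i j)
    (hxy : ∀ k, G.Adj k i → 0 ≤ x k i ∧ x k i ≤ y k i) :
    cavOp G μ y i j ≤ cavOp G μ x i j := by
  rw [cavOp_eq, cavOp_eq]
  refine gamma_antitone (hnn i) (h0 i) (hray i) ((G.mem_neighborFinset i j).mpr hij) ?_
  intro k hk
  exact hxy k (((G.mem_neighborFinset i k).mp (Finset.mem_of_mem_erase hk)).symm)

lemma cav_tendsto (hnn : ∀ i : V, ∀ S ∈ (G.neighborFinset i).powerset, 0 ≤ μ i S)
    (h0 : ∀ i : V, 0 < μ i ∅) {x : ℕ → V → V → ℝ} {z : V → V → ℝ} {i j : V}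
    (hij : G.Adj i j) (hz : ∀ k, G.Adj k i → 0 ≤ z k i)
    (hten : ∀ k, G.Adj k i → Tendsto (fun n => x n k i) atTop (nhds (z k i))) :
    Tendsto (fun n => cavOp G μ (x n) i j) atTop (nhds (cavOp G μ z i j)) := by
  have hmem : ∀ k ∈ (G.neighborFinset i).erase j, G.Adj k i := fun k hk =>
    ((G.mem_neighborFinset i k).mp (Finset.mem_of_mem_erase hk)).symm
  have hnum : Tendsto (fun n => ∑ S ∈ ((G.neighborFinset i).erase j).powerset,
      μ i (insert j S) * ∏ k ∈ S, x n k i) atTop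
      (nhds (∑ S ∈ ((G.neighborFinset i).erase j).powerset,
        μ i (insert j S) * ∏ k ∈ S, z k i)) := by
    refine tendsto_finset_sum _ fun S hS => ?_
    exact Tendsto.const_mul _ (tendsto_finset_prod _ fun k hk =>
      hten k (hmem k (Finset.mem_powerset.mp hS hk)))
  have hden : Tendsto (fun n => ∑ S ∈ ((G.neighborFinset i).erase j).powerset,
      μ i S * ∏ k ∈ S, x n k i) atTop
      (nhds (∑ S ∈ ((G.neighborFinset i).erase j).powerset, μ i S * ∏ k ∈ S, z k i)) := by
    refine tendsto_finset_sum _ fun S hS => ?_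
    exact Tendsto.const_mul _ (tendsto_finset_prod _ fun k hk =>
      hten k (hmem k (Finset.mem_powerset.mp hS hk)))
  have hdpos : (0:ℝ) < ∑ S ∈ ((G.neighborFinset i).erase j).powerset,
      μ i S * ∏ k ∈ S, z k i := by
    have h : 0 < aSS ((G.neighborFinset i).erase j) (μ i) (fun k => z k i) :=
      aSS_pos (fun S hS => hnn i S (Finset.mem_powerset.mpr
        ((Finset.mem_powerset.mp hS).trans (Finset.erase_subset _ _))))
        (fun k hk => hz k (hmem k hk)) (h0 i)
    exact h
  exact hnum.div hden (ne_of_gt hdpos)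

end AuxNet

/-- on a countable locally finite network with Rayleigh local measures
having `μ_i(∅) > 0`, the even and odd cavity iterates from `0` are respectively
nondecreasing and nonincreasing, their limits `x⁻(t), x⁺(t)` exist, are swapped by
`tΓ_G`, and sandwich every nonnegative fixed point. -/
theorem stmt11 {V : Type*} [Countable V] [DecidableEq V] (G : SimpleGraph V)
    [G.LocallyFinite] (μ : V → Finset V → ℝ)
    (hnn : ∀ i : V, ∀ S ∈ (G.neighborFinset i).powerset, 0 ≤ μ i S)
    (h0 : ∀ i : V, 0 < μ i ∅)
    (hray : ∀ i : V, lRayleigh (G.neighborFinset i) (μ i))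
    (t : ℝ) (ht : 0 < t) :
    ∃ xm xp : V → V → ℝ,
      (∀ i j, G.Adj i j →
        Monotone (fun k : ℕ => (cavStep G μ t)^[2 * k] (fun _ _ => 0) i j)) ∧
      (∀ i j, G.Adj i j →
        Antitone (fun k : ℕ => (cavStep G μ t)^[2 * k + 1] (fun _ _ => 0) i j)) ∧
      (∀ i j, G.Adj i j →
        Tendsto (fun k : ℕ => (cavStep G μ t)^[2 * k] (fun _ _ => 0) i j) atTop
          (nhds (xm i j))) ∧
      (∀ i j, G.Adj i j →
        Tendsto (fun k : ℕ => (cavStep G μ t)^[2 * k + 1] (fun _ _ => 0) i j) atTop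
          (nhds (xp i j))) ∧
      (∀ i j, G.Adj i j → t * cavOp G μ xm i j = xp i j) ∧
      (∀ i j, G.Adj i j → t * cavOp G μ xp i j = xm i j) ∧
      (∀ x : V → V → ℝ, (∀ i j, 0 ≤ x i j) →
        (∀ i j, G.Adj i j → x i j = t * cavOp G μ x i j) →
        ∀ i j, G.Adj i j → xm i j ≤ x i j ∧ x i j ≤ xp i j) := by
  classical
  set T : (V → V → ℝ) → (V → V → ℝ) := cavStep G μ t with hT
  set y : ℕ → V → V → ℝ := fun n => T^[n] (fun _ _ => 0) with hy
  have hyS : ∀ n, y (n + 1) = T (y n) := fun n => Function.iterate_succ_apply' T n _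
  have hstep : ∀ (z : V → V → ℝ) (i j : V), T z i j = t * cavOp G μ z i j :=
    fun _ _ _ => rfl
  have hP : ∀ n i j, G.Adj i j → 0 ≤ y n i j := by
    intro n
    induction n with
    | zero => intro i j _; exact le_refl _
    | succ n ih =>
      intro i j hij
      rw [hyS n, hstep]
      exact mul_nonneg ht.le (cav_nonneg G μ hnn h0 hij fun k hk => ih k i hk)
  have hanti : ∀ a b : V → V → ℝ, (∀ k i, G.Adj k i → 0 ≤ a k i ∧ a k i ≤ b k i) →
      ∀ i j, G.Adj i j → T b i j ≤ T a i j := by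
    intro a b hab i j hij
    rw [hstep, hstep]
    exact mul_le_mul_of_nonneg_left
      (cav_antitone G μ hnn h0 hray hij fun k hk => hab k i hk) ht.le
  have hle1 : ∀ n i j, G.Adj i j → y (n + 1) i j ≤ y 1 i j := by
    intro n i j hij
    have h1 : y 1 = T (y 0) := hyS 0
    rw [hyS n, h1]
    exact hanti _ _ (fun k i' hk => ⟨le_refl _, hP n k i' hk⟩) i j hij
  have hE : ∀ n, ∀ i j, G.Adj i j → y (2 * n) i j ≤ y (2 * n + 2) i j := by
    intro n
    induction n with
    | zero =>
      intro i j hij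
      have h1 : y (2 * 0) i j = 0 := rfl
      have h2 : 2 * 0 + 2 = 2 := rfl
      rw [h1, h2]
      exact hP 2 i j hij
    | succ n ih =>
      intro i j hij
      have hOdd : ∀ i' j', G.Adj i' j' → y (2 * n + 3) i' j' ≤ y (2 * n + 1) i' j' := by
        intro i' j' hij'
        have e1 : 2 * n + 3 = (2 * n + 2) + 1 := by omega
        rw [e1, hyS (2 * n + 2), hyS (2 * n)]
        exact hanti _ _ (fun k i'' hk => ⟨hP (2 * n) k i'' hk, ih k i'' hk⟩) i' j' hij'
      have e3 : 2 * (n + 1) = (2 * n + 1) + 1 := by omega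
      have e4 : 2 * (n + 1) + 2 = (2 * n + 3) + 1 := by omega
      rw [e4, e3, hyS (2 * n + 1), hyS (2 * n + 3)]
      exact hanti _ _ (fun k i'' hk => ⟨hP (2 * n + 3) k i'' hk, hOdd k i'' hk⟩) i j hij
  have hO : ∀ n, ∀ i j, G.Adj i j → y (2 * n + 3) i j ≤ y (2 * n + 1) i j := by
    intro n i j hij
    have e1 : 2 * n + 3 = (2 * n + 2) + 1 := by omega
    rw [e1, hyS (2 * n + 2), hyS (2 * n)]
    exact hanti _ _ (fun k i' hk => ⟨hP (2 * n) k i' hk, hE n k i' hk⟩) i j hij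
  have hmono : ∀ i j, G.Adj i j → Monotone fun k : ℕ => y (2 * k) i j := by
    intro i j hij
    refine monotone_nat_of_le_succ fun n => ?_
    show y (2 * n) i j ≤ y (2 * (n + 1)) i j
    have e : 2 * (n + 1) = 2 * n + 2 := by omega
    rw [e]
    exact hE n i j hij
  have hantit : ∀ i j, G.Adj i j → Antitone fun k : ℕ => y (2 * k + 1) i j := by
    intro i j hij
    refine antitone_nat_of_succ_le fun n => ?_
    show y (2 * (n + 1) + 1) i j ≤ y (2 * n + 1) i j
    have e : 2 * (n + 1) + 1 = 2 * n + 3 := by omega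
    rw [e]
    exact hO n i j hij
  set xm : V → V → ℝ := fun i j => ⨆ k : ℕ, y (2 * k) i j with hxm
  set xp : V → V → ℝ := fun i j => ⨅ k : ℕ, y (2 * k + 1) i j with hxp
  have hbdd : ∀ i j, G.Adj i j → BddAbove (Set.range fun k : ℕ => y (2 * k) i j) := by
    intro i j hij
    refine ⟨y 1 i j, ?_⟩
    rintro z ⟨k, rfl⟩
    cases k with
    | zero =>
      show y (2 * 0) i j ≤ y 1 i j
      have h1 : y (2 * 0) i j = 0 := rfl
      rw [h1]
      exact hP 1 i j hij
    | succ m =>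
      have e : 2 * (m + 1) = (2 * m + 1) + 1 := by omega
      show y (2 * (m + 1)) i j ≤ y 1 i j
      rw [e]
      exact hle1 (2 * m + 1) i j hij
  have hbddb : ∀ i j, G.Adj i j → BddBelow (Set.range fun k : ℕ => y (2 * k + 1) i j) :=
    fun i j hij => ⟨0, by rintro z ⟨k, rfl⟩; exact hP (2 * k + 1) i j hij⟩
  have htm : ∀ i j, G.Adj i j →
      Tendsto (fun k : ℕ => y (2 * k) i j) atTop (nhds (xm i j)) :=
    fun i j hij => tendsto_atTop_ciSup (hmono i j hij) (hbdd i j hij)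
  have htp : ∀ i j, G.Adj i j →
      Tendsto (fun k : ℕ => y (2 * k + 1) i j) atTop (nhds (xp i j)) :=
    fun i j hij => tendsto_atTop_ciInf (hantit i j hij) (hbddb i j hij)
  have hxm0 : ∀ i j, G.Adj i j → 0 ≤ xm i j := by
    intro i j hij
    exact le_ciSup (hbdd i j hij) 0
  have hxp0 : ∀ i j, G.Adj i j → 0 ≤ xp i j :=
    fun i j hij => le_ciInf fun k => hP (2 * k + 1) i j hij
  have hswap1 : ∀ i j, G.Adj i j → t * cavOp G μ xm i j = xp i j := by
    intro i j hij
    have h1 : Tendsto (fun k : ℕ => t * cavOp G μ (y (2 * k)) i j) atTop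
        (nhds (t * cavOp G μ xm i j)) :=
      (cav_tendsto G μ hnn h0 (x := fun n => y (2 * n)) (z := xm) hij
        (fun k hk => hxm0 k i hk) (fun k hk => htm k i hk)).const_mul t
    have h2 : Tendsto (fun k : ℕ => y (2 * k + 1) i j) atTop
        (nhds (t * cavOp G μ xm i j)) := by
      refine h1.congr fun k => ?_
      rw [hyS (2 * k)]
      rfl
    exact tendsto_nhds_unique h2 (htp i j hij)
  have hswap2 : ∀ i j, G.Adj i j → t * cavOp G μ xp i j = xm i j := by
    intro i j hij
    have h1 : Tendsto (fun k : ℕ => t * cavOp G μ (y (2 * k + 1)) i j) atTop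
        (nhds (t * cavOp G μ xp i j)) :=
      (cav_tendsto G μ hnn h0 (x := fun n => y (2 * n + 1)) (z := xp) hij
        (fun k hk => hxp0 k i hk) (fun k hk => htp k i hk)).const_mul t
    have h2 : Tendsto (fun k : ℕ => y (2 * k + 2) i j) atTop
        (nhds (t * cavOp G μ xp i j)) := by
      refine h1.congr fun k => ?_
      have e : 2 * k + 2 = (2 * k + 1) + 1 := by omega
      rw [e, hyS (2 * k + 1)]
      rfl
    have h3 : Tendsto (fun k : ℕ => y (2 * k + 2) i j) atTop (nhds (xm i j)) := by
      have h4 := (htm i j hij).comp (tendsto_add_atTop_nat 1)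
      refine h4.congr fun k => ?_
      show y (2 * (k + 1)) i j = y (2 * k + 2) i j
      have e : 2 * (k + 1) = 2 * k + 2 := by omega
      rw [e]
    exact tendsto_nhds_unique h2 h3
  have hsand : ∀ x : V → V → ℝ, (∀ i j, 0 ≤ x i j) →
      (∀ i j, G.Adj i j → x i j = t * cavOp G μ x i j) →
      ∀ i j, G.Adj i j → xm i j ≤ x i j ∧ x i j ≤ xp i j := by
    intro x hx hfix
    have hTx : ∀ i j, G.Adj i j → T x i j = x i j := fun i j hij => by
      rw [hstep]; exact (hfix i j hij).symm
    have hsk : ∀ k, (∀ i j, G.Adj i j → y (2 * k) i j ≤ x i j) ∧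
        (∀ i j, G.Adj i j → x i j ≤ y (2 * k + 1) i j) := by
      intro k
      induction k with
      | zero =>
        constructor
        · intro i j hij
          have h1 : y (2 * 0) i j = 0 := rfl
          rw [h1]
          exact hx i j
        · intro i j hij
          have e : 2 * 0 + 1 = 0 + 1 := rfl
          rw [e, hyS 0, ← hTx i j hij]
          exact hanti _ _ (fun k' i' hk => ⟨le_refl _, hx k' i'⟩) i j hij
      | succ k ih =>
        obtain ⟨ihE, ihO⟩ := ih
        have hE' : ∀ i j, G.Adj i j → y (2 * (k + 1)) i j ≤ x i j := by
          intro i j hij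
          have e : 2 * (k + 1) = (2 * k + 1) + 1 := by omega
          rw [e, hyS (2 * k + 1), ← hTx i j hij]
          exact hanti _ _ (fun k' i' hk => ⟨hx k' i', ihO k' i' hk⟩) i j hij
        refine ⟨hE', ?_⟩
        intro i j hij
        rw [hyS (2 * (k + 1)), ← hTx i j hij]
        exact hanti _ _ (fun k' i' hk => ⟨hP (2 * (k + 1)) k' i' hk, hE' k' i' hk⟩) i j hij
    intro i j hij
    exact ⟨ciSup_le fun k => (hsk k).1 i j hij, le_ciInf fun k => (hsk k).2 i j hij⟩
  refine ⟨xm, xp, ?_, ?_, ?_, ?_, ?_, ?_, ?_⟩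
  · intro i j hij; exact hmono i j hij
  · intro i j hij; exact hantit i j hij
  · intro i j hij; exact htm i j hij
  · intro i j hij; exact htp i j hij
  · exact hswap1
  · exact hswap2
  · exact hsand
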